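/- Let λ be a Lagrangian subspace of H and let U : H → H be a bijective isometric linear map with U ∘ J = J ∘ U such that U − Id is a compact operator. Then U(λ) is a Lagrangian subspace, and for every Lagrangian subspace ν of H, the pair (ν, λ) is a Fredholm pair if and only if (ν, U(λ)) is a Fredholm pair. -/

import Mathlib

open scoped RealInnerProductSpace

/-- The annihilator of a set `μ` with respect to the symplectic form `ω(x, y) = ⟪J x, y⟫`. -/
def omegaAnn {H : Type*} [NormedAddCommGroup H] [InnerProductSpace ℝ H]
    (J : H →L[ℝ] H) (μ : Set H) : Set H :=
  {x : H | ∀ y ∈ μ, ⟪J x, y⟫ = 0}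

/-- A pair of closed subspaces is a Fredholm pair if their intersection is finite-dimensional
and their sum is closed and of finite codimension. -/
def IsFredholmPair {H : Type*} [NormedAddCommGroup H] [InnerProductSpace ℝ H]
    (μ ν : Submodule ℝ H) : Prop :=
  FiniteDimensional ℝ ↥(μ ⊓ ν) ∧ IsClosed ((μ ⊔ ν : Submodule ℝ H) : Set H) ∧
    FiniteDimensional ℝ (H ⧸ (μ ⊔ ν))

open Filter Topology

section GoodSeq

variable {X Y : Type*} [NormedAddCommGroup X] [NormedSpace ℝ X]
  [NormedAddCommGroup Y] [NormedSpace ℝ Y]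

/-- A continuous linear map is "good" (upper semi-Fredholm-like) if every bounded sequence whose
image is Cauchy has a convergent subsequence. -/
def GoodSeq (T : X →L[ℝ] Y) : Prop :=
  ∀ x : ℕ → X, (∃ C, ∀ n, ‖x n‖ ≤ C) → CauchySeq (fun n => T (x n)) →
    ∃ φ : ℕ → ℕ, StrictMono φ ∧ ∃ l : X, Tendsto (fun n => x (φ n)) atTop (𝓝 l)

theorem GoodSeq.add_compact {T K : X →L[ℝ] Y} (hT : GoodSeq T) (hK : IsCompactOperator K) :
    GoodSeq (T + K) := by
  intro x hx hc
  obtain ⟨C, hC⟩ := hx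
  obtain ⟨M, hM, hMim⟩ := hK.image_subset_compact_of_bounded
    (Metric.isBounded_closedBall (x := (0 : X)) (r := C))
  have hmem : ∀ n, K (x n) ∈ M := fun n =>
    hMim ⟨x n, by simpa [Metric.mem_closedBall, dist_eq_norm] using hC n, rfl⟩
  obtain ⟨z, _, φ, hφ, hz⟩ := hM.tendsto_subseq hmem
  have hφt : Tendsto φ atTop atTop := hφ.tendsto_atTop
  have h1 : CauchySeq fun n => (T + K) (x (φ n)) :=
    (hc.comp_tendsto hφt :)
  have h2 : CauchySeq fun n => K (x (φ n)) := hz.cauchySeq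
  have h3 : CauchySeq fun n => T (x (φ n)) := by
    have h4 := h1.add h2.neg
    have heq : ((fun n => (T + K) (x (φ n))) + -fun n => K (x (φ n)))
        = fun n => T (x (φ n)) := by
      funext n
      simp [Pi.add_apply, Pi.neg_apply]
    rwa [heq] at h4
  obtain ⟨ψ, hψ, l, hl⟩ := hT (fun n => x (φ n)) ⟨C, fun n => hC _⟩ h3
  exact ⟨φ ∘ ψ, hφ.comp hψ, l, hl⟩

end GoodSeq

section Char

variable {X Y : Type*} [NormedAddCommGroup X] [InnerProductSpace ℝ X] [CompleteSpace X]
  [NormedAddCommGroup Y] [NormedSpace ℝ Y] [CompleteSpace Y]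

theorem goodSeq_of_fredholm {T : X →L[ℝ] Y}
    (hker : FiniteDimensional ℝ (T.ker)) (hran : IsClosed (Set.range T)) :
    GoodSeq T := by
  classical
  set k : Submodule ℝ X := T.ker with hk
  haveI : CompleteSpace k := FiniteDimensional.complete ℝ k
  -- the restriction of T to the orthogonal complement of the kernel, corestricted to the range
  set R : Submodule ℝ Y := T.range with hR
  haveI : CompleteSpace R := hran.completeSpace_coe
  set f : kᗮ →L[ℝ] R :=
    (T.comp kᗮ.subtypeL).codRestrict R (fun v => LinearMap.mem_range_self _ _) with hf
  have hfker : f.ker = ⊥ := by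
    apply le_antisymm _ bot_le
    rintro v hv
    have hfv : (f v : Y) = 0 := by
      rw [LinearMap.mem_ker, ContinuousLinearMap.coe_coe] at hv
      rw [hv]; rfl
    have hv' : T (v : X) = 0 := hfv
    have h1 : (v : X) ∈ k := hv'
    have h2 := Submodule.mem_inf.mpr ⟨h1, v.2⟩
    rw [Submodule.inf_orthogonal_eq_bot, Submodule.mem_bot] at h2
    simpa [Submodule.mem_bot] using Subtype.ext h2
  have hfran : f.range = ⊤ := by
    rw [LinearMap.range_eq_top]
    rintro ⟨y, hy⟩
    obtain ⟨x, hx⟩ := hy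
    refine ⟨⟨x - (Submodule.orthogonalProjection k x : X), Submodule.sub_starProjection_mem_orthogonal (K := k) x⟩, ?_⟩
    have hpk : T ((Submodule.orthogonalProjection k x : X)) = 0 := (Submodule.orthogonalProjection k x).2
    have hpk' : T (k.starProjection x) = 0 := hpk
    simp only [ContinuousLinearMap.coe_coe] at hx
    apply Subtype.ext
    show T (x - k.starProjection x) = y
    rw [map_sub, hpk', sub_zero, hx]
  set e := ContinuousLinearEquiv.ofBijective f hfker hfran with he
  have hbound : ∀ v : kᗮ, ‖(v : X)‖ ≤ ‖(e.symm : R →L[ℝ] kᗮ)‖ * ‖T v‖ := by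
    intro v
    have h1 : e.symm (e v) = v := e.symm_apply_apply v
    calc ‖(v : X)‖ = ‖e.symm (e v)‖ := by rw [h1]; rfl
      _ ≤ ‖(e.symm : R →L[ℝ] kᗮ)‖ * ‖e v‖ := (e.symm : R →L[ℝ] kᗮ).le_opNorm _
      _ = ‖(e.symm : R →L[ℝ] kᗮ)‖ * ‖T v‖ := by
          have hev : e v = f v :=
            congrFun (ContinuousLinearEquiv.coeFn_ofBijective f hfker hfran) v
          rw [hev]
          congr 1
  -- now prove the sequence property
  intro x hx hc
  obtain ⟨C, hC⟩ := hx
  set c := ‖(e.symm : R →L[ℝ] kᗮ)‖ with hcdef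
  set a : ℕ → k := fun n => Submodule.orthogonalProjection k (x n) with ha
  set b : ℕ → kᗮ := fun n => ⟨x n - a n, Submodule.sub_starProjection_mem_orthogonal (K := k) (x n)⟩ with hb
  have hxab : ∀ n, x n = (a n : X) + (b n : X) := fun n => by simp [hb]
  have hTb : ∀ n, T ((b n : X)) = T (x n) := by
    intro n
    have h0 : T ((a n : X)) = 0 := (a n).2
    simp [hb, map_sub, h0]
  have key : ∀ m n, dist (b m) (b n) ≤ c * dist (T (x m)) (T (x n)) := by
    intro m n
    have h1 : dist (b m) (b n) = ‖((b m - b n : kᗮ) : X)‖ := by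
      rw [Subtype.dist_eq, dist_eq_norm]; norm_cast
    have h2 := hbound (b m - b n)
    rw [h1]
    refine h2.trans (le_of_eq ?_)
    rw [dist_eq_norm]
    congr 1
    push_cast
    rw [map_sub, hTb m, hTb n]
  have hcnn : (0:ℝ) ≤ c := norm_nonneg _
  have hbC : CauchySeq b := by
    rcases eq_or_lt_of_le hcnn with hc0 | hc0
    · rw [Metric.cauchySeq_iff]
      intro ε hε
      exact ⟨0, fun m _ n _ => lt_of_le_of_lt (by simpa [← hc0] using key m n) hε⟩
    · rw [Metric.cauchySeq_iff]
      intro ε hε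
      obtain ⟨N, hN⟩ := Metric.cauchySeq_iff.mp hc (ε / c) (by positivity)
      refine ⟨N, fun m hm n hn => ?_⟩
      calc dist (b m) (b n) ≤ c * dist (T (x m)) (T (x n)) := key m n
        _ < c * (ε / c) := mul_lt_mul_of_pos_left (hN m hm n hn) hc0
        _ = ε := by field_simp
  haveI : CompleteSpace kᗮ := k.isClosed_orthogonal.completeSpace_coe
  obtain ⟨bl, hbl⟩ := cauchySeq_tendsto_of_complete hbC
  have haBall : ∀ n, a n ∈ Metric.closedBall (0 : k) C := by
    intro n
    rw [Metric.mem_closedBall, dist_zero_right]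
    have h1 : ‖a n‖ ≤ ‖Submodule.orthogonalProjection k‖ * ‖x n‖ :=
      (Submodule.orthogonalProjection k).le_opNorm (x n)
    have h2 : ‖Submodule.orthogonalProjection k‖ * ‖x n‖ ≤ 1 * C :=
      mul_le_mul (Submodule.orthogonalProjection_norm_le k) (hC n) (norm_nonneg _) zero_le_one
    linarith
  obtain ⟨al, _, φ, hφ, hal⟩ := (isCompact_closedBall (0 : k) C).tendsto_subseq haBall
  refine ⟨φ, hφ, (al : X) + (bl : X), ?_⟩
  have h1 : Tendsto (fun n => ((a (φ n)) : X)) atTop (𝓝 (al : X)) :=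
    (continuous_subtype_val.tendsto al).comp hal
  have h2 : Tendsto (fun n => ((b (φ n)) : X)) atTop (𝓝 (bl : X)) :=
    (continuous_subtype_val.tendsto bl).comp (hbl.comp hφ.tendsto_atTop)
  have := h1.add h2
  simpa [← hxab] using this

end Char

section Char2

variable {X Y : Type*} [NormedAddCommGroup X] [InnerProductSpace ℝ X] [CompleteSpace X]
  [NormedAddCommGroup Y] [NormedSpace ℝ Y]

theorem fredholm_of_goodSeq {T : X →L[ℝ] Y} (hT : GoodSeq T) :
    FiniteDimensional ℝ (T.ker) ∧ IsClosed (Set.range T) := by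
  classical
  set k : Submodule ℝ X := T.ker with hk
  have hkclosed : IsClosed (k : Set X) := ContinuousLinearMap.isClosed_ker T
  -- finite-dimensionality of the kernel, via Riesz
  have hkfin : FiniteDimensional ℝ k := by
    apply FiniteDimensional.of_isCompact_closedBall₀ (𝕜 := ℝ) (V := k) one_pos
    rw [isCompact_iff_isSeqCompact]
    intro u hu
    have hbnd : ∀ n, ‖(u n : X)‖ ≤ 1 := by
      intro n
      have := hu n
      rwa [Metric.mem_closedBall, dist_zero_right] at this
    have hcseq : CauchySeq (fun n => T ((u n : X))) := by
      have hz : ∀ n, T ((u n : X)) = 0 := fun n => (u n).2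
      simp only [hz]
      exact cauchySeq_const 0
    obtain ⟨φ, hφ, l, hl⟩ := hT (fun n => (u n : X)) ⟨1, hbnd⟩ hcseq
    have hlk : l ∈ k := hkclosed.mem_of_tendsto hl
      (Filter.Eventually.of_forall fun n => (u (φ n)).2)
    have hln : ‖l‖ ≤ 1 := le_of_tendsto hl.norm
      (Filter.Eventually.of_forall fun n => hbnd (φ n))
    refine ⟨⟨l, hlk⟩, ?_, φ, hφ, ?_⟩
    · rw [Metric.mem_closedBall, dist_zero_right]
      exact hln
    · rw [tendsto_subtype_rng]
      exact hl
  -- T is bounded below on the orthogonal complement of the kernel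
  have hbdd : ∃ c : ℝ, 0 < c ∧ ∀ v ∈ kᗮ, c * ‖v‖ ≤ ‖T v‖ := by
    by_contra hcon
    push_neg at hcon
    have hch : ∀ n : ℕ, ∃ v ∈ kᗮ, ‖T v‖ < (1 / (n + 1 : ℝ)) * ‖v‖ := fun n =>
      hcon (1 / (n + 1 : ℝ)) (by positivity)
    choose v hvmem hvlt using hch
    have hvne : ∀ n, v n ≠ 0 := by
      intro n h0
      have := hvlt n
      rw [h0] at this
      simp at this
    set u : ℕ → X := fun n => ‖v n‖⁻¹ • v n with hu
    have hunorm : ∀ n, ‖u n‖ = 1 := by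
      intro n
      rw [hu]
      simp [norm_smul, inv_mul_cancel₀ (norm_ne_zero_iff.mpr (hvne n))]
    have humem : ∀ n, u n ∈ kᗮ := fun n => Submodule.smul_mem _ _ (hvmem n)
    have hTu : ∀ n, ‖T (u n)‖ ≤ 1 / (n + 1 : ℝ) := by
      intro n
      rw [hu]
      simp only [map_smul, norm_smul, norm_inv, norm_norm]
      rw [inv_mul_le_iff₀ (norm_pos_iff.mpr (hvne n)), mul_comm]
      exact (hvlt n).le
    have hTu0 : Filter.Tendsto (fun n => T (u n)) atTop (𝓝 0) :=
      squeeze_zero_norm hTu tendsto_one_div_add_atTop_nhds_zero_nat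
    obtain ⟨φ, hφ, l, hl⟩ := hT u ⟨1, fun n => (hunorm n).le⟩ hTu0.cauchySeq
    have hlnorm : ‖l‖ = 1 := by
      have h1 : Filter.Tendsto (fun n => ‖u (φ n)‖) atTop (𝓝 ‖l‖) := hl.norm
      have h2 : Filter.Tendsto (fun n => ‖u (φ n)‖) atTop (𝓝 1) := by
        simp only [hunorm]
        exact tendsto_const_nhds
      exact tendsto_nhds_unique h1 h2
    have hlmem : l ∈ kᗮ := k.isClosed_orthogonal.mem_of_tendsto hl
      (Filter.Eventually.of_forall fun n => humem (φ n))
    have hTl : T l = 0 := by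
      have h1 : Filter.Tendsto (fun n => T (u (φ n))) atTop (𝓝 (T l)) :=
        (T.continuous.tendsto l).comp hl
      have h2 : Filter.Tendsto (fun n => T (u (φ n))) atTop (𝓝 0) :=
        hTu0.comp hφ.tendsto_atTop
      exact tendsto_nhds_unique h1 h2
    have hlk : l ∈ k := hTl
    have : l = 0 := by
      have := Submodule.mem_inf.mpr ⟨hlk, hlmem⟩
      rwa [Submodule.inf_orthogonal_eq_bot, Submodule.mem_bot] at this
    rw [this, norm_zero] at hlnorm
    exact zero_ne_one hlnorm
  obtain ⟨c, hc0, hc⟩ := hbdd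
  -- range of T is closed
  refine ⟨hkfin, ?_⟩
  haveI : CompleteSpace k := FiniteDimensional.complete ℝ k
  haveI : CompleteSpace kᗮ := k.isClosed_orthogonal.completeSpace_coe
  set T' : kᗮ →L[ℝ] Y := T.comp kᗮ.subtypeL with hT'
  have hA : AntilipschitzWith (⟨c, hc0.le⟩ : NNReal)⁻¹ T' := by
    apply AntilipschitzWith.of_le_mul_dist
    intro x y
    have h1 := hc ((x : X) - (y : X)) (sub_mem x.2 y.2)
    rw [Subtype.dist_eq, dist_eq_norm, dist_eq_norm]
    have h2 : T ((x : X) - (y : X)) = T' x - T' y := by simp [hT', map_sub]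
    rw [h2] at h1
    have key : ‖(x : X) - (y : X)‖ ≤ c⁻¹ * ‖T' x - T' y‖ := by
      rw [← div_eq_inv_mul, le_div_iff₀ hc0]
      linarith
    convert key using 2
    exact NNReal.coe_inv _
  have hcr : IsClosed (Set.range T') := hA.isClosed_range T'.uniformContinuous
  have hrr : Set.range (⇑T) = Set.range (⇑T') := by
    ext y
    constructor
    · rintro ⟨x, rfl⟩
      refine ⟨⟨x - (Submodule.orthogonalProjection k x : X),
        Submodule.sub_starProjection_mem_orthogonal (K := k) x⟩, ?_⟩
      have hpk : T ((Submodule.orthogonalProjection k x : X)) = 0 := (Submodule.orthogonalProjection k x).2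
      have hpk' : T (k.starProjection x) = 0 := hpk
      simp [hT', map_sub, hpk, hpk']
    · rintro ⟨v, rfl⟩
      exact ⟨v, rfl⟩
  rw [hrr]
  exact hcr

theorem goodSeq_iff [CompleteSpace Y] {T : X →L[ℝ] Y} :
    GoodSeq T ↔ FiniteDimensional ℝ (T.ker) ∧ IsClosed (Set.range T) :=
  ⟨fredholm_of_goodSeq, fun h => goodSeq_of_fredholm h.1 h.2⟩

end Char2

section Pair

variable {H : Type*} [NormedAddCommGroup H] [InnerProductSpace ℝ H] [CompleteSpace H]

/-- The addition map `ν ×₂ lam → H`, `(a, b) ↦ a + W b`. -/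
noncomputable def pairMap (ν lam : Submodule ℝ H) (W : H →L[ℝ] H) :
    WithLp 2 (↥ν × ↥lam) →L[ℝ] H :=
  ((ν.subtypeL.comp (ContinuousLinearMap.fst ℝ ↥ν ↥lam)) +
    ((W.comp lam.subtypeL).comp (ContinuousLinearMap.snd ℝ ↥ν ↥lam))).comp
    (WithLp.prodContinuousLinearEquiv 2 ℝ ↥ν ↥lam).toContinuousLinearMap

theorem pairMap_apply (ν lam : Submodule ℝ H) (W : H →L[ℝ] H)
    (p : WithLp 2 (↥ν × ↥lam)) :
    pairMap ν lam W p = ((WithLp.prodContinuousLinearEquiv 2 ℝ ↥ν ↥lam p).1 : H) +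
      W ((WithLp.prodContinuousLinearEquiv 2 ℝ ↥ν ↥lam p).2 : H) := rfl

theorem range_pairMap (ν lam : Submodule ℝ H) (W : H →L[ℝ] H) :
    Set.range ⇑(pairMap ν lam W) =
      ((ν ⊔ Submodule.map (W : H →ₗ[ℝ] H) lam : Submodule ℝ H) : Set H) := by
  ext z
  simp only [Set.mem_range, SetLike.mem_coe]
  constructor
  · rintro ⟨p, rfl⟩
    rw [pairMap_apply]
    refine Submodule.mem_sup.mpr ⟨_, (WithLp.prodContinuousLinearEquiv 2 ℝ ↥ν ↥lam p).1.2,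
      _, ?_, rfl⟩
    exact Submodule.mem_map.mpr
      ⟨_, (WithLp.prodContinuousLinearEquiv 2 ℝ ↥ν ↥lam p).2.2, rfl⟩
  · intro hz
    obtain ⟨a, ha, b, hb, rfl⟩ := Submodule.mem_sup.mp hz
    obtain ⟨b0, hb0, rfl⟩ := Submodule.mem_map.mp hb
    exact ⟨(WithLp.prodContinuousLinearEquiv 2 ℝ ↥ν ↥lam).symm (⟨a, ha⟩, ⟨b0, hb0⟩), by
      rw [pairMap_apply, ContinuousLinearEquiv.apply_symm_apply]; rfl⟩

theorem finiteDimensional_ker_pairMap_iff (ν lam : Submodule ℝ H) (W : H →L[ℝ] H)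
    (hW : Function.Injective ⇑W) :
    FiniteDimensional ℝ ((pairMap ν lam W).ker) ↔
      FiniteDimensional ℝ ↥(ν ⊓ Submodule.map (W : H →ₗ[ℝ] H) lam) := by
  classical
  set E := WithLp.prodContinuousLinearEquiv 2 ℝ ↥ν ↥lam with hE
  set μ := Submodule.map (W : H →ₗ[ℝ] H) lam with hμ
  set S := pairMap ν lam W with hS
  have hSapp : ∀ p : WithLp 2 (↥ν × ↥lam), S p = ((E p).1 : H) + W ((E p).2 : H) :=
    fun p => rfl
  have hmem : ∀ p : S.ker, ((E (p : WithLp 2 (↥ν × ↥lam))).1 : H) ∈ ν ⊓ μ := by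
    rintro ⟨p, hp⟩
    rw [LinearMap.mem_ker, ContinuousLinearMap.coe_coe] at hp
    rw [hSapp] at hp
    refine Submodule.mem_inf.mpr ⟨(E p).1.2, ?_⟩
    refine Submodule.mem_map.mpr ⟨-((E p).2 : H), neg_mem (E p).2.2, ?_⟩
    show W (-((E p).2 : H)) = ((E p).1 : H)
    rw [map_neg]
    exact neg_eq_of_add_eq_zero_left hp
  set F1 : S.ker →ₗ[ℝ] ↥(ν ⊓ μ) :=
    { toFun := fun p => ⟨((E (p : WithLp 2 (↥ν × ↥lam))).1 : H), hmem p⟩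
      map_add' := by
        intro p q
        apply Subtype.ext
        simp
      map_smul' := by
        intro c p
        apply Subtype.ext
        simp } with hF1
  have hF1app : ∀ p : S.ker,
      (F1 p : H) = ((E (p : WithLp 2 (↥ν × ↥lam))).1 : H) := fun _ => rfl
  have hinj : Function.Injective F1 := by
    rintro ⟨p, hp⟩ ⟨q, hq⟩ hpq
    have h1 : ((E p).1 : H) = ((E q).1 : H) := congrArg (Subtype.val : ↥(ν ⊓ μ) → H) hpq
    rw [LinearMap.mem_ker, ContinuousLinearMap.coe_coe, hSapp] at hp hq
    have hp' : W ((E p).2 : H) = -((E p).1 : H) := eq_neg_of_add_eq_zero_right hp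
    have hq' : W ((E q).2 : H) = -((E q).1 : H) := eq_neg_of_add_eq_zero_right hq
    have h2 : ((E p).2 : H) = ((E q).2 : H) := hW (by rw [hp', hq', h1])
    have h3 : E p = E q := Prod.ext (Subtype.ext h1) (Subtype.ext h2)
    exact Subtype.ext (E.injective h3)
  have hsurj : Function.Surjective F1 := by
    rintro ⟨z, hz⟩
    obtain ⟨hzν, hzμ⟩ := Submodule.mem_inf.mp hz
    obtain ⟨b, hb, hWb⟩ := Submodule.mem_map.mp hzμ
    have hker : E.symm ((⟨z, hzν⟩ : ↥ν), -(⟨b, hb⟩ : ↥lam)) ∈ S.ker := by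
      rw [LinearMap.mem_ker, ContinuousLinearMap.coe_coe, hSapp, E.apply_symm_apply]
      show z + W (-b) = 0
      rw [map_neg]
      have : W b = z := hWb
      rw [this]
      exact add_neg_cancel z
    refine ⟨⟨_, hker⟩, ?_⟩
    apply Subtype.ext
    rw [hF1app]
    show ((E (E.symm _)).1 : H) = z
    rw [E.apply_symm_apply]
  constructor
  · intro h
    haveI := h
    exact (LinearEquiv.ofBijective F1 ⟨hinj, hsurj⟩).finiteDimensional
  · intro h
    haveI := h
    exact (LinearEquiv.ofBijective F1 ⟨hinj, hsurj⟩).symm.finiteDimensional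

theorem pair_conditions_iff (ν lam : Submodule ℝ H) (hν : IsClosed (ν : Set H))
    (hlam : IsClosed (lam : Set H)) (W : H →L[ℝ] H) (hW : Function.Injective ⇑W) :
    (FiniteDimensional ℝ ↥(ν ⊓ Submodule.map (W : H →ₗ[ℝ] H) lam) ∧
      IsClosed ((ν ⊔ Submodule.map (W : H →ₗ[ℝ] H) lam : Submodule ℝ H) : Set H)) ↔
    GoodSeq (pairMap ν lam W) := by
  haveI : CompleteSpace ↥ν := hν.completeSpace_coe
  haveI : CompleteSpace ↥lam := hlam.completeSpace_coe
  rw [goodSeq_iff, finiteDimensional_ker_pairMap_iff ν lam W hW, range_pairMap]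

theorem conditions_perturb (ν lam : Submodule ℝ H) (hν : IsClosed (ν : Set H))
    (hlam : IsClosed (lam : Set H)) (U : H →L[ℝ] H) (hUinj : Function.Injective ⇑U)
    (hUcpt : IsCompactOperator (fun x : H => U x - x)) :
    (FiniteDimensional ℝ ↥(ν ⊓ lam) ∧ IsClosed ((ν ⊔ lam : Submodule ℝ H) : Set H)) ↔
    (FiniteDimensional ℝ ↥(ν ⊓ Submodule.map (U : H →ₗ[ℝ] H) lam) ∧
      IsClosed ((ν ⊔ Submodule.map (U : H →ₗ[ℝ] H) lam : Submodule ℝ H) : Set H)) := by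
  have h1 := pair_conditions_iff ν lam hν hlam (ContinuousLinearMap.id ℝ H)
    (fun a b h => h)
  have hid : Submodule.map ((ContinuousLinearMap.id ℝ H : H →L[ℝ] H) : H →ₗ[ℝ] H) lam
      = lam := by
    convert Submodule.map_id lam
    rfl
  rw [hid] at h1
  have h2 := pair_conditions_iff ν lam hν hlam U hUinj
  rw [h1, h2]
  set T := pairMap ν lam (ContinuousLinearMap.id ℝ H) with hT
  set S := pairMap ν lam U with hS
  set E := WithLp.prodContinuousLinearEquiv 2 ℝ ↥ν ↥lam with hE
  set g : WithLp 2 (↥ν × ↥lam) →L[ℝ] H :=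
    lam.subtypeL.comp ((ContinuousLinearMap.snd ℝ ↥ν ↥lam).comp
      E.toContinuousLinearMap) with hg
  have hK : IsCompactOperator ⇑(S - T) := by
    have heq : ⇑(S - T) = (fun x : H => U x - x) ∘ ⇑g := by
      funext p
      show S p - T p = U (g p) - g p
      rw [hS, hT, pairMap_apply, pairMap_apply]
      show ((E p).1 : H) + U ((E p).2 : H) - (((E p).1 : H) + ((E p).2 : H))
        = U ((E p).2 : H) - ((E p).2 : H)
      abel
    rw [heq]
    exact hUcpt.comp_clm g
  constructor
  · intro hGT
    have h3 := hGT.add_compact hK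
    have h4 : T + (S - T) = S := by abel
    rwa [h4] at h3
  · intro hGS
    have hK' : IsCompactOperator ⇑(T - S) := by
      have heq : ⇑(T - S) = -⇑(S - T) := by
        funext p
        show T p - S p = -(S p - T p)
        abel
      rw [heq]
      exact hK.neg
    have h3 := hGS.add_compact hK'
    have h4 : S + (T - S) = T := by abel
    rwa [h4] at h3

end Pair

section Final

variable {H : Type*} [NormedAddCommGroup H] [InnerProductSpace ℝ H] [CompleteSpace H]

theorem omegaAnn_isClosed (J : H →L[ℝ] H) (s : Set H) : IsClosed (omegaAnn J s) := by
  have h : omegaAnn J s = ⋂ y ∈ s, {x : H | ⟪J x, y⟫ = 0} := by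
    ext x; simp [omegaAnn]
  rw [h]
  exact isClosed_biInter fun y _ =>
    isClosed_eq ((J.continuous).inner continuous_const) continuous_const

theorem lagrangian_orthogonal (J : H →L[ℝ] H) (hJ2 : ∀ x : H, J (J x) = -x)
    (μ : Submodule ℝ H) (hμ : omegaAnn J (μ : Set H) = (μ : Set H)) :
    μᗮ = Submodule.map (J : H →ₗ[ℝ] H) μ := by
  have hJneg : ∀ x : H, J (-(J x)) = x := fun x => by rw [map_neg, hJ2, neg_neg]
  ext x
  rw [Submodule.mem_orthogonal]
  constructor
  · intro hx
    have hmem : -(J x) ∈ omegaAnn J (μ : Set H) := by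
      intro y hy
      rw [hJneg x]
      rw [real_inner_comm]
      exact hx y hy
    rw [hμ] at hmem
    exact Submodule.mem_map.mpr ⟨-(J x), hmem, hJneg x⟩
  · intro hx u hu
    obtain ⟨m, hm, rfl⟩ := Submodule.mem_map.mp hx
    have : m ∈ omegaAnn J (μ : Set H) := by rw [hμ]; exact hm
    have h2 := this u hu
    rw [real_inner_comm]
    exact h2

theorem lagrangian_quot_findim (J : H →L[ℝ] H) (hJ2 : ∀ x : H, J (J x) = -x)
    (ν μ : Submodule ℝ H) (hν : omegaAnn J (ν : Set H) = (ν : Set H))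
    (hμ : omegaAnn J (μ : Set H) = (μ : Set H))
    (hcl : IsClosed ((ν ⊔ μ : Submodule ℝ H) : Set H))
    (hfin : FiniteDimensional ℝ ↥(ν ⊓ μ)) :
    FiniteDimensional ℝ (H ⧸ (ν ⊔ μ)) := by
  haveI : CompleteSpace ↥(ν ⊔ μ) := hcl.completeSpace_coe
  have hJinj : Function.Injective ((J : H →ₗ[ℝ] H)) := by
    intro a b hab
    have h := congrArg J hab
    rwa [ContinuousLinearMap.coe_coe, hJ2, hJ2, neg_inj] at h
  have horthsup : (ν ⊔ μ)ᗮ = Submodule.map (J : H →ₗ[ℝ] H) (ν ⊓ μ) := by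
    rw [← Submodule.inf_orthogonal, lagrangian_orthogonal J hJ2 ν hν,
      lagrangian_orthogonal J hJ2 μ hμ]
    exact (Submodule.map_inf _ hJinj).symm
  haveI : FiniteDimensional ℝ ↥((ν ⊔ μ)ᗮ) := by
    rw [horthsup]
    haveI := hfin
    exact (Submodule.equivMapOfInjective _ hJinj (ν ⊓ μ)).finiteDimensional
  exact (Submodule.quotientEquivOfIsCompl (ν ⊔ μ) (ν ⊔ μ)ᗮ
    Submodule.isCompl_orthogonal_of_hasOrthogonalProjection).symm.finiteDimensional

end Final

/-- If `U` is unitary (bijective, isometric, commuting with `J`) with `U − Id` compact, then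
`U(λ)` is Lagrangian and for every Lagrangian `ν`, `(ν, λ)` is a Fredholm pair iff
`(ν, U(λ))` is. -/
theorem fredholmPair_invariant_under_unitary_compact_perturbation
    {H : Type*} [NormedAddCommGroup H] [InnerProductSpace ℝ H] [CompleteSpace H]
    (J : H →L[ℝ] H) (hJ2 : ∀ x : H, J (J x) = -x)
    (hJorth : ∀ x y : H, ⟪J x, J y⟫ = ⟪x, y⟫)
    (lam : Submodule ℝ H) (hlam : omegaAnn J (lam : Set H) = (lam : Set H))
    (U : H →L[ℝ] H) (hUbij : Function.Bijective ⇑U)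
    (hUiso : ∀ x y : H, ⟪U x, U y⟫ = ⟪x, y⟫)
    (hUJ : ∀ x : H, U (J x) = J (U x))
    (hUcpt : IsCompactOperator (fun x : H => U x - x)) :
    omegaAnn J (⇑U '' (lam : Set H)) = ⇑U '' (lam : Set H) ∧
    ∀ ν : Submodule ℝ H, omegaAnn J (ν : Set H) = (ν : Set H) →
      (IsFredholmPair ν lam ↔ IsFredholmPair ν (lam.map (U : H →ₗ[ℝ] H))) := by
  have hUinj : Function.Injective ⇑U := hUbij.injective
  have hker : U.ker = ⊥ := LinearMap.ker_eq_bot.mpr hUinj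
  have hrange : U.range = ⊤ := LinearMap.range_eq_top.mpr hUbij.surjective
  set Ue : H ≃L[ℝ] H := ContinuousLinearEquiv.ofBijective U hker hrange with hUedef
  have hUe : ⇑Ue = ⇑U := ContinuousLinearEquiv.coeFn_ofBijective U hker hrange
  have hUes : ∀ x : H, U (Ue.symm x) = x := fun x => by
    calc U (Ue.symm x) = Ue (Ue.symm x) := (congrFun hUe _).symm
      _ = x := Ue.apply_symm_apply x
  have hsymmJ : ∀ x : H, Ue.symm (J x) = J (Ue.symm x) := fun x =>
    hUinj (by rw [hUes, hUJ, hUes])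
  have hinner : ∀ x y : H, ⟪J x, U y⟫ = ⟪J (Ue.symm x), y⟫ := fun x y => by
    conv_lhs => rw [← hUes (J x)]
    rw [hUiso, hsymmJ]
  have hpart1 : omegaAnn J (⇑U '' (lam : Set H)) = ⇑U '' (lam : Set H) := by
    ext x
    simp only [omegaAnn, Set.mem_setOf_eq]
    constructor
    · intro hx
      have hmem : Ue.symm x ∈ omegaAnn J (lam : Set H) := by
        intro y hy
        have h := hx (U y) ⟨y, hy, rfl⟩
        rwa [hinner] at h
      rw [hlam] at hmem
      exact ⟨Ue.symm x, hmem, hUes x⟩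
    · rintro ⟨b, hb, rfl⟩ y hy
      obtain ⟨b', hb', rfl⟩ := hy
      rw [hinner]
      have hsb : Ue.symm (U b) = b := by apply hUinj; rw [hUes]
      rw [hsb]
      have hb2 : b ∈ omegaAnn J (lam : Set H) := by rw [hlam]; exact hb
      exact hb2 b' hb'
  refine ⟨hpart1, ?_⟩
  intro ν hν
  have hlamC : IsClosed (lam : Set H) := by rw [← hlam]; exact omegaAnn_isClosed J _
  have hνC : IsClosed (ν : Set H) := by rw [← hν]; exact omegaAnn_isClosed J _
  have hUlam : omegaAnn J ((lam.map (U : H →ₗ[ℝ] H) : Submodule ℝ H) : Set H)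
      = ((lam.map (U : H →ₗ[ℝ] H) : Submodule ℝ H) : Set H) := by
    rw [Submodule.map_coe]
    exact hpart1
  have hmain := conditions_perturb ν lam hνC hlamC U hUinj hUcpt
  constructor
  · rintro ⟨h1, h2, h3⟩
    obtain ⟨h1', h2'⟩ := hmain.mp ⟨h1, h2⟩
    exact ⟨h1', h2', lagrangian_quot_findim J hJ2 ν _ hν hUlam h2' h1'⟩
  · rintro ⟨h1, h2, h3⟩
    obtain ⟨h1', h2'⟩ := hmain.mpr ⟨h1, h2⟩
    exact ⟨h1', h2', lagrangian_quot_findim J hJ2 ν lam hν hlam h2' h1'⟩
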